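/- Let p be a prime, G a subgroup of the multiplicative group 𝔽_p^* = 𝔽_p \ {0}, and let g, h : G → 𝔽_p^* be arbitrary functions. Define f(x,y) = g(x)(h(x) + y) on G × 𝔽_p^* and set m = μ(g·h), where (g·h)(x) = g(x)h(x). Then for any sets A ⊆ G and B, C ⊆ 𝔽_p^*, one has |f(A,B)| · |B·C| ≥ (1/8) · min( |A|·|B|²·|C| / (p·m²), p·|B| / m ). -/

import Mathlib

open Pointwise

open Finset in
set_option maxHeartbeats 1600000 in
/-- Theorem 1: for `G` a subgroup of `𝔽_p^*`, arbitrary `g, h : G → 𝔽_p^*`,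
`f(x,y) = g(x)(h(x)+y)` and `m = μ(g·h)`, for all `A ⊆ G` and `B, C ⊆ 𝔽_p^*`,
`|f(A,B)|·|B·C| ≥ (1/8)·min(|A||B|²|C|/(p m²), p|B|/m)`. -/
theorem stmt_4 (p : ℕ) (hp : p.Prime)
    (G : Finset (ZMod p))
    (hG0 : (0 : ZMod p) ∉ G) (hG1 : (1 : ZMod p) ∈ G)
    (hGmul : ∀ x ∈ G, ∀ y ∈ G, x * y ∈ G) (hGinv : ∀ x ∈ G, x⁻¹ ∈ G)
    (g h : ZMod p → ZMod p)
    (hg : ∀ x ∈ G, g x ≠ 0) (hh : ∀ x ∈ G, h x ≠ 0)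
    (A B C : Finset (ZMod p))
    (hA : A ⊆ G) (hB : ∀ b ∈ B, b ≠ 0) (hC : ∀ c ∈ C, c ≠ 0)
    (m : ℕ)
    (hm : m = (G.image fun x => g x * h x).sup
      fun t => (G.filter fun x => g x * h x = t).card) :
    ((Finset.image₂ (fun x y => g x * (h x + y)) A B).card : ℝ) * ((B * C).card : ℝ) ≥
      (1 / 8) * min (((A.card : ℝ) * (B.card : ℝ) ^ 2 * (C.card : ℝ)) / ((p : ℝ) * (m : ℝ) ^ 2))
        (((p : ℝ) * (B.card : ℝ)) / (m : ℝ)) := by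
  haveI : Fact p.Prime := ⟨hp⟩
  classical
  have hp0 : (0:ℝ) < p := by exact_mod_cast hp.pos
  -- m ≥ 1
  have hm1 : 1 ≤ m := by
    rw [hm]
    refine le_trans ?_ (Finset.le_sup (f := fun t => (G.filter fun x => g x * h x = t).card)
      (Finset.mem_image_of_mem (fun x => g x * h x) hG1))
    exact Finset.card_pos.2 ⟨1, Finset.mem_filter.2 ⟨hG1, rfl⟩⟩
  have hmR : (1:ℝ) ≤ m := by exact_mod_cast hm1
  have hLHS0 : (0:ℝ) ≤ ((Finset.image₂ (fun x y => g x * (h x + y)) A B).card : ℝ) *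
      ((B * C).card : ℝ) := by positivity
  -- degenerate case
  by_cases hdeg : A = ∅ ∨ B = ∅ ∨ C = ∅
  · have hz : ((A.card : ℝ) * (B.card : ℝ) ^ 2 * (C.card : ℝ)) = 0 := by
      rcases hdeg with h' | h' | h' <;> simp [h']
    refine le_trans ?_ hLHS0
    have : min (((A.card : ℝ) * (B.card : ℝ) ^ 2 * (C.card : ℝ)) / ((p : ℝ) * (m : ℝ) ^ 2))
        (((p : ℝ) * (B.card : ℝ)) / (m : ℝ)) ≤ 0 := by
      refine le_trans (min_le_left _ _) ?_
      rw [hz, zero_div]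
    linarith
  push_neg at hdeg
  obtain ⟨hAne, hBne, hCne⟩ := hdeg
  have hA1 : (1:ℝ) ≤ A.card := by
    have := Finset.card_pos.2 hAne; exact_mod_cast this
  have hB1 : (1:ℝ) ≤ B.card := by
    have := Finset.card_pos.2 hBne; exact_mod_cast this
  have hC1 : (1:ℝ) ≤ C.card := by
    have := Finset.card_pos.2 hCne; exact_mod_cast this
  -- setup
  set D := Finset.image₂ (fun x y => g x * (h x + y)) A B with hD
  set E := B * C with hE
  set Q : Finset (ZMod p × ZMod p) := A ×ˢ C with hQ
  set tt : ZMod p × ZMod p → ZMod p := fun ac => g ac.1 * h ac.1 with htt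
  set lam : ZMod p × ZMod p → ZMod p := fun ac => g ac.1 / ac.2 with hlam
  set L : ZMod p × ZMod p → ℕ :=
    fun z => (Q.filter fun ac => z.1 = tt ac + lam ac * z.2).card with hL
  have hlamne : ∀ ac ∈ Q, lam ac ≠ 0 := by
    rintro ⟨a, c⟩ hac
    rw [hQ, Finset.mem_product] at hac
    exact div_ne_zero (hg a (hA hac.1)) (hC c hac.2)
  -- swap lemma
  have hswap : ∀ P : Finset (ZMod p × ZMod p),
      ∑ z ∈ P, L z = ∑ ac ∈ Q, (P.filter fun z => z.1 = tt ac + lam ac * z.2).card := by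
    intro P
    simp only [hL, Finset.card_filter]
    exact Finset.sum_comm
  -- lower bound on incidences
  have h_lower : A.card * B.card * C.card ≤ ∑ z ∈ D ×ˢ E, L z := by
    rw [hswap]
    have : ∀ ac ∈ Q, B.card ≤
        ((D ×ˢ E).filter fun z => z.1 = tt ac + lam ac * z.2).card := by
      rintro ⟨a, c⟩ hac
      rw [hQ, Finset.mem_product] at hac
      obtain ⟨ha, hc⟩ := hac
      have hc0 : c ≠ 0 := hC c hc
      apply Finset.card_le_card_of_injOn (fun b => (g a * (h a + b), b * c))
      · intro b hb
        simp only [Finset.mem_coe, Finset.mem_filter, Finset.mem_product]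
        refine ⟨⟨?_, ?_⟩, ?_⟩
        · exact Finset.mem_image₂_of_mem ha hb
        · exact Finset.mul_mem_mul hb hc
        · show g a * (h a + b) = tt (a, c) + lam (a, c) * (b * c)
          simp only [htt, hlam]
          field_simp
      · intro b1 _ b2 _ hbb
        have := congrArg Prod.snd hbb
        simp only at this
        exact mul_right_cancel₀ hc0 this
    calc A.card * B.card * C.card = ∑ _ac ∈ Q, B.card := by
          rw [Finset.sum_const, hQ, Finset.card_product, smul_eq_mul]; ring
      _ ≤ _ := Finset.sum_le_sum this
  -- each line has p points in the plane
  have h_line_card : ∀ t l : ZMod p,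
      ((Finset.univ.filter fun z : ZMod p × ZMod p => z.1 = t + l * z.2)).card = p := by
    intro t l
    have : (Finset.univ.filter fun z : ZMod p × ZMod p => z.1 = t + l * z.2)
        = Finset.univ.image (fun e : ZMod p => (t + l * e, e)) := by
      ext ⟨z1, z2⟩
      simp only [Finset.mem_filter, Finset.mem_univ, true_and, Finset.mem_image, Prod.mk.injEq]
      constructor
      · rintro rfl; exact ⟨z2, rfl, rfl⟩
      · rintro ⟨e, rfl, rfl⟩; rfl
    rw [this, Finset.card_image_of_injective _ (fun a b hab => by
        simpa using congrArg Prod.snd hab), Finset.card_univ, ZMod.card]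
  have h_sum_univ : ∑ z : ZMod p × ZMod p, L z = (A.card * C.card) * p := by
    rw [hswap]
    rw [Finset.sum_congr rfl (fun ac _ => h_line_card (tt ac) (lam ac)),
      Finset.sum_const, hQ, Finset.card_product, smul_eq_mul]
  -- two distinct lines meet in at most 1 point; any line set ≤ p
  have h_pair_le : ∀ q : (ZMod p × ZMod p) × (ZMod p × ZMod p),
      ((Finset.univ.filter fun z : ZMod p × ZMod p =>
        z.1 = tt q.1 + lam q.1 * z.2 ∧ z.1 = tt q.2 + lam q.2 * z.2)).card ≤
      if tt q.1 = tt q.2 ∧ lam q.1 = lam q.2 then p else 1 := by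
    intro q
    by_cases hsame : tt q.1 = tt q.2 ∧ lam q.1 = lam q.2
    · rw [if_pos hsame]
      calc _ ≤ ((Finset.univ.filter fun z : ZMod p × ZMod p =>
            z.1 = tt q.1 + lam q.1 * z.2)).card := by
            apply Finset.card_le_card
            intro z hz
            rw [Finset.mem_filter] at hz ⊢
            exact ⟨hz.1, hz.2.1⟩
        _ = p := h_line_card _ _
    · rw [if_neg hsame]
      rw [Finset.card_le_one]
      intro z hz w hw
      rw [Finset.mem_filter] at hz hw
      obtain ⟨-, hz1, hz2⟩ := hz
      obtain ⟨-, hw1, hw2⟩ := hw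
      by_cases hll : lam q.1 = lam q.2
      · exfalso
        apply hsame
        refine ⟨?_, hll⟩
        rw [← hll] at hz2
        linear_combination hz2 - hz1
      · have key : ∀ u : ZMod p × ZMod p, u.1 = tt q.1 + lam q.1 * u.2 →
            u.1 = tt q.2 + lam q.2 * u.2 → (lam q.1 - lam q.2) * u.2 = tt q.2 - tt q.1 := by
          intro u h1 h2
          linear_combination h2 - h1
        have h2 : z.2 = w.2 := by
          apply mul_left_cancel₀ (sub_ne_zero.2 hll)
          rw [key z hz1 hz2, key w hw1 hw2]
        have h1 : z.1 = w.1 := by rw [hz1, hw1, h2]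
        exact Prod.ext h1 h2
  -- S2 : number of coincident ordered line pairs
  set S2 : ℕ := ((Q ×ˢ Q).filter fun q =>
    tt q.1 = tt q.2 ∧ lam q.1 = lam q.2).card with hS2def
  have h_S2 : S2 ≤ (A.card * C.card) * m := by
    have hrw : S2 = ∑ ac ∈ Q, (Q.filter fun ac' =>
        tt ac = tt ac' ∧ lam ac = lam ac').card := by
      rw [hS2def, Finset.card_filter, Finset.sum_product]
      refine Finset.sum_congr rfl fun ac _ => ?_
      rw [Finset.card_filter]
    rw [hrw]
    have hbound : ∀ ac ∈ Q, (Q.filter fun ac' =>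
        tt ac = tt ac' ∧ lam ac = lam ac').card ≤ m := by
      rintro ⟨a, c⟩ hac
      rw [hQ, Finset.mem_product] at hac
      obtain ⟨ha, hc⟩ := hac
      have : (Q.filter fun ac' => tt (a, c) = tt ac' ∧ lam (a, c) = lam ac').card ≤
          (G.filter fun x => g x * h x = g a * h a).card := by
        apply Finset.card_le_card_of_injOn (fun ac' => ac'.1)
        · rintro ⟨a', c'⟩ hmem
          rw [Finset.mem_coe, Finset.mem_filter, hQ, Finset.mem_product] at hmem
          obtain ⟨⟨ha', hc'⟩, he1, he2⟩ := hmem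
          rw [Finset.mem_coe, Finset.mem_filter]
          exact ⟨hA ha', (by simpa [htt] using he1.symm)⟩
        · rintro ⟨a1, c1⟩ hmem1 ⟨a2, c2⟩ hmem2 heq
          simp only at heq
          subst heq
          rw [Finset.mem_coe, Finset.mem_filter, hQ, Finset.mem_product] at hmem1 hmem2
          have hl1 : g a / c = g a1 / c1 := hmem1.2.2
          have hl2 : g a / c = g a1 / c2 := hmem2.2.2
          have hg1 : g a1 ≠ 0 := hg a1 (hA hmem1.1.1)
          have hc1 : c1 ≠ 0 := hC c1 hmem1.1.2
          have hc2 : c2 ≠ 0 := hC c2 hmem2.1.2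
          have : g a1 / c1 = g a1 / c2 := by rw [← hl1, ← hl2]
          have hinv : c1⁻¹ = c2⁻¹ := by
            rw [div_eq_mul_inv, div_eq_mul_inv] at this
            exact mul_left_cancel₀ hg1 this
          have : c1 = c2 := inv_injective hinv
          simp [this]
      refine le_trans this ?_
      rw [hm]
      exact Finset.le_sup (f := fun t => (G.filter fun x => g x * h x = t).card)
        (Finset.mem_image_of_mem (fun x => g x * h x) (hA ha))
    calc ∑ ac ∈ Q, (Q.filter fun ac' => tt ac = tt ac' ∧ lam ac = lam ac').card
        ≤ ∑ _ac ∈ Q, m := Finset.sum_le_sum hbound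
      _ = A.card * C.card * m := by
          rw [Finset.sum_const, smul_eq_mul, hQ, Finset.card_product]
  -- sum of squares bound
  have h_sum_sq : ∑ z : ZMod p × ZMod p, (L z)^2 ≤
      p * S2 + (A.card * C.card)^2 := by
    have hLsq : ∀ z : ZMod p × ZMod p, (L z)^2 = ∑ q ∈ Q ×ˢ Q,
        if z.1 = tt q.1 + lam q.1 * z.2 ∧ z.1 = tt q.2 + lam q.2 * z.2 then 1 else 0 := by
      intro z
      rw [hL]
      simp only [← Finset.card_filter]
      rw [sq, ← Finset.card_product, ← Finset.filter_product]
    have hstep : ∑ z : ZMod p × ZMod p, (L z)^2 = ∑ q ∈ Q ×ˢ Q,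
        ((Finset.univ.filter fun z : ZMod p × ZMod p =>
          z.1 = tt q.1 + lam q.1 * z.2 ∧ z.1 = tt q.2 + lam q.2 * z.2)).card := by
      simp only [hLsq, Finset.card_filter]
      exact Finset.sum_comm
    rw [hstep]
    calc ∑ q ∈ Q ×ˢ Q, ((Finset.univ.filter fun z : ZMod p × ZMod p =>
          z.1 = tt q.1 + lam q.1 * z.2 ∧ z.1 = tt q.2 + lam q.2 * z.2)).card
        ≤ ∑ q ∈ Q ×ˢ Q, (if tt q.1 = tt q.2 ∧ lam q.1 = lam q.2 then p else 1) :=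
          Finset.sum_le_sum (fun q _ => h_pair_le q)
      _ = p * S2 + ((Q ×ˢ Q).filter fun q =>
            ¬(tt q.1 = tt q.2 ∧ lam q.1 = lam q.2)).card := by
          rw [Finset.sum_ite, Finset.sum_const, Finset.sum_const, hS2def,
            smul_eq_mul, smul_eq_mul, mul_comm, mul_one]
      _ ≤ p * S2 + (A.card * C.card)^2 := by
          refine Nat.add_le_add_left ?_ _
          calc ((Q ×ˢ Q).filter fun q =>
              ¬(tt q.1 = tt q.2 ∧ lam q.1 = lam q.2)).card
              ≤ (Q ×ˢ Q).card := Finset.card_le_card (Finset.filter_subset _ _)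
            _ = (A.card * C.card)^2 := by
              rw [Finset.card_product, hQ, Finset.card_product, sq]
  -- pass to the reals
  set aR : ℝ := (A.card : ℝ) with haR
  set bR : ℝ := (B.card : ℝ) with hbR
  set cR : ℝ := (C.card : ℝ) with hcR
  set w : ℝ := aR * cR with hwdef
  set x : ℝ := ((D ×ˢ E).card : ℝ) with hxdef
  set i : ℝ := ∑ z ∈ D ×ˢ E, (L z : ℝ) with hidef
  have hpne : (p:ℝ) ≠ 0 := ne_of_gt hp0
  have hx0 : (0:ℝ) ≤ x := by positivity
  have hk : aR * bR * cR ≤ i := by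
    have : ((A.card * B.card * C.card : ℕ) : ℝ) ≤ ((∑ z ∈ D ×ˢ E, L z : ℕ) : ℝ) :=
      Nat.cast_le.mpr h_lower
    push_cast at this
    rw [hidef]
    convert this using 2 <;> push_cast <;> ring
  have hsum_univR : ∑ z : ZMod p × ZMod p, (L z : ℝ) = w * p := by
    have := congrArg (Nat.cast : ℕ → ℝ) h_sum_univ
    push_cast at this
    rw [hwdef]
    convert this using 2 <;> push_cast <;> ring
  have hS2R : (S2 : ℝ) ≤ w * m := by
    have : ((S2 : ℕ) : ℝ) ≤ ((A.card * C.card * m : ℕ) : ℝ) := Nat.cast_le.mpr h_S2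
    push_cast at this
    rw [hwdef]
    convert this using 1 <;> push_cast <;> ring
  have hsumsqR : ∑ z : ZMod p × ZMod p, (L z : ℝ)^2 ≤ (p:ℝ) * S2 + w^2 := by
    have : ((∑ z : ZMod p × ZMod p, (L z)^2 : ℕ) : ℝ)
        ≤ ((p * S2 + (A.card * C.card)^2 : ℕ) : ℝ) := Nat.cast_le.mpr h_sum_sq
    push_cast at this
    rw [hwdef]
    convert this using 2 <;> push_cast <;> ring
  have hcardplane : ((Finset.univ : Finset (ZMod p × ZMod p)).card : ℝ) = (p:ℝ)^2 := by
    rw [Finset.card_univ, Fintype.card_prod, ZMod.card]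
    push_cast
    ring
  have hexp : ∑ z : ZMod p × ZMod p, ((L z : ℝ) - w/p)^2
      = (∑ z : ZMod p × ZMod p, (L z : ℝ)^2) - w^2 := by
    have hterm : ∀ z : ZMod p × ZMod p, ((L z:ℝ) - w/p)^2
        = (L z:ℝ)^2 - (2*(w/p))*(L z:ℝ) + (w/p)^2 := fun z => by ring
    rw [Finset.sum_congr rfl (fun z _ => hterm z), Finset.sum_add_distrib,
      Finset.sum_sub_distrib, ← Finset.mul_sum, Finset.sum_const, hsum_univR,
      nsmul_eq_mul]
    rw [show ((Finset.univ : Finset (ZMod p × ZMod p)).card : ℝ) = (p:ℝ)^2 from hcardplane]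
    field_simp
    ring
  have hCS : (∑ z ∈ D ×ˢ E, ((L z:ℝ) - w/p))^2
      ≤ x * ∑ z ∈ D ×ˢ E, ((L z:ℝ) - w/p)^2 := by
    rw [hxdef]
    exact sq_sum_le_card_mul_sum_sq
  have hmono : ∑ z ∈ D ×ˢ E, ((L z:ℝ) - w/p)^2
      ≤ ∑ z : ZMod p × ZMod p, ((L z:ℝ) - w/p)^2 :=
    Finset.sum_le_sum_of_subset_of_nonneg (Finset.subset_univ _) (fun z _ _ => sq_nonneg _)
  have hsumlhs : ∑ z ∈ D ×ˢ E, ((L z:ℝ) - w/p) = i - x * (w/p) := by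
    rw [Finset.sum_sub_distrib, Finset.sum_const, nsmul_eq_mul, hidef, hxdef]
  have hfinal : (i - x*(w/p))^2 ≤ x * ((p:ℝ) * (w * m)) := by
    calc (i - x*(w/p))^2 = (∑ z ∈ D ×ˢ E, ((L z:ℝ) - w/p))^2 := by rw [hsumlhs]
      _ ≤ x * ∑ z ∈ D ×ˢ E, ((L z:ℝ) - w/p)^2 := hCS
      _ ≤ x * ∑ z : ZMod p × ZMod p, ((L z:ℝ) - w/p)^2 :=
          mul_le_mul_of_nonneg_left hmono hx0
      _ = x * ((∑ z : ZMod p × ZMod p, (L z:ℝ)^2) - w^2) := by rw [hexp]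
      _ ≤ x * ((p:ℝ) * S2) := by
          apply mul_le_mul_of_nonneg_left _ hx0
          linarith [hsumsqR]
      _ ≤ x * ((p:ℝ) * (w * m)) := by
          apply mul_le_mul_of_nonneg_left _ hx0
          exact mul_le_mul_of_nonneg_left hS2R (le_of_lt hp0)
  have hxeq : (D.card : ℝ) * (E.card : ℝ) = x := by
    rw [hxdef, Finset.card_product]
    push_cast
    ring
  have hm0 : (0:ℝ) < m := by linarith
  have haR0 : (0:ℝ) < aR := lt_of_lt_of_le one_pos hA1
  have hbR0 : (0:ℝ) < bR := lt_of_lt_of_le one_pos hB1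
  have hcR0 : (0:ℝ) < cR := lt_of_lt_of_le one_pos hC1
  have hw : w = aR * cR := hwdef
  clear_value aR bR cR w x i
  clear hwdef hxdef hidef hsum_univR hS2R hsumsqR hexp hCS hmono hsumlhs
    hswap h_lower h_sum_univ h_pair_le h_S2 h_sum_sq hL hlamne h_line_card hS2def
  subst hw
  rw [ge_iff_le, hxeq]
  clear_value D E Q tt lam L S2
  by_cases hcase : aR * bR * cR / 2 ≤ aR * cR * x / p
  · -- second branch of the min: x ≥ p*b/2
    have h1 : aR*bR*cR*(p:ℝ) ≤ aR*cR*x*2 := (div_le_div_iff₀ (by norm_num) hp0).1 hcase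
    have hac : (0:ℝ) < aR * cR := mul_pos haR0 hcR0
    have hx2 : (p:ℝ) * bR / 2 ≤ x := by
      rw [div_le_iff₀ (by norm_num : (0:ℝ) < 2)]
      have h2 : aR * cR * ((p:ℝ) * bR) ≤ aR * cR * (x * 2) := by
        calc aR * cR * ((p:ℝ) * bR) = aR*bR*cR*(p:ℝ) := by ring
          _ ≤ aR*cR*x*2 := h1
          _ = aR * cR * (x * 2) := by ring
      exact le_of_mul_le_mul_left h2 hac
    calc (1/8 : ℝ) * min (aR * bR ^ 2 * cR / ((p:ℝ) * (m:ℝ)^2)) ((p:ℝ) * bR / m)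
        ≤ (1/8) * ((p:ℝ) * bR / m) :=
          mul_le_mul_of_nonneg_left (min_le_right _ _) (by norm_num)
      _ ≤ (1/8) * ((p:ℝ) * bR) := by
          apply mul_le_mul_of_nonneg_left _ (by norm_num)
          exact div_le_self (by positivity) hmR
      _ ≤ x := by linarith [hx2]
  · -- first branch of the min
    have hlt : aR * cR * x / p < aR * bR * cR / 2 := not_le.1 hcase
    have hge : aR * bR * cR / 2 ≤ i - x * (aR * cR / p) := by
      have hxw : x * (aR * cR / p) = aR * cR * x / p := by ring
      linarith [hk]
    have hsq : (aR * bR * cR / 2)^2 ≤ x * ((p:ℝ) * (aR * cR * m)) :=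
      le_trans (pow_le_pow_left₀ (by positivity) hge 2) hfinal
    have hac : (0:ℝ) < aR * cR := mul_pos haR0 hcR0
    have hx1 : aR * bR^2 * cR / (4 * (p:ℝ) * m) ≤ x := by
      rw [div_le_iff₀ (by positivity)]
      have h2 : aR * cR * (aR * bR^2 * cR) ≤ aR * cR * (x * (4 * (p:ℝ) * m)) := by
        calc aR * cR * (aR * bR^2 * cR) = 4*((aR * bR * cR / 2)^2) := by ring
          _ ≤ 4*(x * ((p:ℝ) * (aR * cR * m))) := by linarith [hsq]
          _ = aR * cR * (x * (4 * (p:ℝ) * m)) := by ring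
      exact le_of_mul_le_mul_left h2 hac
    calc (1/8 : ℝ) * min (aR * bR ^ 2 * cR / ((p:ℝ) * (m:ℝ)^2)) ((p:ℝ) * bR / m)
        ≤ (1/8) * (aR * bR ^ 2 * cR / ((p:ℝ) * (m:ℝ)^2)) :=
          mul_le_mul_of_nonneg_left (min_le_left _ _) (by norm_num)
      _ = aR * bR ^ 2 * cR / (8 * ((p:ℝ) * (m:ℝ)^2)) := by ring
      _ ≤ aR * bR^2 * cR / (4 * (p:ℝ) * m) := by
          apply div_le_div_of_nonneg_left (by positivity) (by positivity)
          calc 4 * (p:ℝ) * (m:ℝ) = 4*((p:ℝ)*(m:ℝ))*1 := by ring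
            _ ≤ 4*((p:ℝ)*(m:ℝ))*(2*(m:ℝ)) := by
                apply mul_le_mul_of_nonneg_left _ (by positivity)
                linarith
            _ = 8 * ((p:ℝ) * (m:ℝ)^2) := by ring
      _ ≤ x := hx1
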